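/- Existence and uniqueness of the formal reproducing kernel Hilbert space of a positive kernel: let K : ℤ^d × ℤ^d → L(F) be a positive kernel. Then there exist a complex Hilbert space G and a family of bounded operators ρ_n : G → F (n ∈ ℤ^d) which is separating (the intersection of the kernels of all ρ_n is {0}) and satisfies ρ_n ∘ ρ_m^* = K(n, m) for all n, m ∈ ℤ^d. Moreover such data are unique up to unitary equivalence: if (G', (ρ'_n)) is another pair with (ρ'_n) separating and ρ'_n ∘ (ρ'_m)^* = K(n, m) for all n, m, then there exists a unitary operator V : G → G' with ρ'_n ∘ V = ρ_n for all n ∈ ℤ^d. -/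

import Mathlib

open ContinuousLinearMap
open scoped ComplexOrder

universe u

/-- An operator-valued kernel `K : ℤ^d × ℤ^d → L(F)` is a positive kernel if
`∑_{n,m} ⟨K(n,m) u(m), u(n)⟩ ≥ 0` for every finitely supported `u : ℤ^d → F`. -/
def IsPosKernel {d : ℕ} {F : Type u} [NormedAddCommGroup F] [InnerProductSpace ℂ F]
    (K : (Fin d → ℤ) → (Fin d → ℤ) → F →L[ℂ] F) : Prop :=
  ∀ u : (Fin d → ℤ) →₀ F,
    0 ≤ ∑ n ∈ u.support, ∑ m ∈ u.support, (inner ℂ (K n m (u m)) (u n) : ℂ)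

namespace FRKHS
variable {d : ℕ} {F : Type u} [NormedAddCommGroup F] [InnerProductSpace ℂ F]

/-- Sesquilinear form on finitely supported functions: linear in `u`, conj-linear in `v`. -/
noncomputable def B (K : (Fin d → ℤ) → (Fin d → ℤ) → F →L[ℂ] F)
    (u v : (Fin d → ℤ) →₀ F) : ℂ :=
  u.sum fun n un => v.sum fun m vm => inner ℂ (K n m vm) un

variable (K : (Fin d → ℤ) → (Fin d → ℤ) → F →L[ℂ] F)

lemma B_add_left (u u' v : (Fin d → ℤ) →₀ F) :
    B K (u + u') v = B K u v + B K u' v := by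
  unfold B
  rw [Finsupp.sum_add_index']
  · intro n; simp
  · intro n a b; simp [inner_add_right, Finsupp.sum_add]

lemma B_smul_left (c : ℂ) (u v : (Fin d → ℤ) →₀ F) :
    B K (c • u) v = c * B K u v := by
  unfold B
  rw [Finsupp.sum_smul_index' (fun n => by simp)]
  simp only [Finsupp.sum, Finset.mul_sum, inner_smul_right]

lemma B_add_right (u v v' : (Fin d → ℤ) →₀ F) :
    B K u (v + v') = B K u v + B K u v' := by
  unfold B
  rw [← Finsupp.sum_add]
  congr 1; ext n un
  rw [Finsupp.sum_add_index']
  · intro m; simp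
  · intro m a b; simp [inner_add_left]

lemma B_smul_right (c : ℂ) (u v : (Fin d → ℤ) →₀ F) :
    B K u (c • v) = starRingEnd ℂ c * B K u v := by
  have : ∀ n un, (c • v).sum (fun m vm => (inner ℂ (K n m vm) un : ℂ))
      = starRingEnd ℂ c * v.sum fun m vm => inner ℂ (K n m vm) un := by
    intro n un
    rw [Finsupp.sum_smul_index' (fun m => by simp)]
    simp only [Finsupp.sum, Finset.mul_sum, map_smul, inner_smul_left]
  rw [show B K u (c • v) = u.sum fun n un => starRingEnd ℂ c *
      v.sum (fun m vm => (inner ℂ (K n m vm) un : ℂ)) from Finsupp.sum_congr fun n _ => this n _]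
  simp only [B, Finsupp.sum, Finset.mul_sum]

lemma B_zero_right (u : (Fin d → ℤ) →₀ F) : B K u 0 = 0 := by
  simp [B, Finsupp.sum_zero_index]

lemma B_zero_left (v : (Fin d → ℤ) →₀ F) : B K 0 v = 0 := by
  simp [B, Finsupp.sum_zero_index]

lemma B_sub_left (u u' v : (Fin d → ℤ) →₀ F) :
    B K (u - u') v = B K u v - B K u' v := by
  have h := B_add_left K (u - u') u' v
  rw [sub_add_cancel] at h
  rw [h]; ring

lemma B_sub_right (u v v' : (Fin d → ℤ) →₀ F) :
    B K u (v - v') = B K u v - B K u v' := by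
  have h := B_add_right K u (v - v') v'
  rw [sub_add_cancel] at h
  rw [h]; ring

variable {K}

lemma B_self_nonneg (hK : IsPosKernel K) (u : (Fin d → ℤ) →₀ F) : 0 ≤ B K u u := hK u

lemma B_self_conj (hK : IsPosKernel K) (u : (Fin d → ℤ) →₀ F) :
    starRingEnd ℂ (B K u u) = B K u u := by
  have h := B_self_nonneg hK u
  have him : (B K u u).im = 0 := by
    have := (Complex.le_def.mp h).2
    simpa using this.symm
  exact Complex.conj_eq_iff_im.mpr him

lemma B_self_re_nonneg (hK : IsPosKernel K) (u : (Fin d → ℤ) →₀ F) :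
    0 ≤ (B K u u).re := by
  have h := (Complex.le_def.mp (B_self_nonneg hK u)).1
  simpa using h

lemma B_self_eq_re (hK : IsPosKernel K) (u : (Fin d → ℤ) →₀ F) :
    B K u u = ((B K u u).re : ℂ) := by
  have him : (B K u u).im = 0 := by
    have := (Complex.le_def.mp (B_self_nonneg hK u)).2
    simpa using this.symm
  exact (Complex.re_add_im (B K u u) ▸ by rw [him]; simp)

lemma B_conj (hK : IsPosKernel K) (u v : (Fin d → ℤ) →₀ F) :
    B K v u = starRingEnd ℂ (B K u v) := by
  have e1 : B K (u + v) (u + v) = B K u u + B K u v + B K v u + B K v v := by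
    rw [B_add_left, B_add_right, B_add_right]; ring
  have e2 : B K (u + Complex.I • v) (u + Complex.I • v)
      = B K u u + starRingEnd ℂ Complex.I * B K u v + Complex.I * B K v u
        + (Complex.I * starRingEnd ℂ Complex.I) * B K v v := by
    rw [B_add_left, B_add_right, B_add_right, B_smul_left, B_smul_right, B_smul_left,
      B_smul_right]
    ring
  have h1 := B_self_conj hK (u + v)
  rw [e1] at h1
  simp only [map_add, B_self_conj hK u, B_self_conj hK v] at h1
  have h2 := B_self_conj hK (u + Complex.I • v)
  rw [e2] at h2
  simp only [map_add, map_mul, map_neg, Complex.conj_I, neg_neg,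
    B_self_conj hK u, B_self_conj hK v] at h2
  have hI : Complex.I * Complex.I = -1 := Complex.I_mul_I
  linear_combination (-h1 + Complex.I * h2) / 2 - hI * (starRingEnd ℂ (B K u v)
    - starRingEnd ℂ (B K v u) + B K u v - B K v u) / 2

lemma B_null (hK : IsPosKernel K) {u : (Fin d → ℤ) →₀ F} (h : B K u u = 0)
    (v : (Fin d → ℤ) →₀ F) : B K u v = 0 := by
  set x := B K u v with hx
  set q := Complex.normSq x with hq
  set br := (B K v v).re with hbr'
  have hbr : 0 ≤ br := B_self_re_nonneg hK v
  have key : ∀ s : ℝ, 0 ≤ -2*s*q + s^2*q*br := by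
    intro s
    have h0 := B_self_nonneg hK (u + (-(s:ℂ) * x) • v)
    have hexp : B K (u + (-(s:ℂ) * x) • v) (u + (-(s:ℂ) * x) • v)
        = ((-2*s*q + s^2*q*br : ℝ) : ℂ) := by
      rw [B_add_left, B_add_right, B_add_right, B_smul_left, B_smul_right, B_smul_left,
        B_smul_right, h, B_conj hK u v, B_self_eq_re hK v]
      have hxx : (starRingEnd ℂ) x * x = (q:ℂ) := by
        rw [hq]; exact_mod_cast (Complex.normSq_eq_conj_mul_self (z := x)).symm
      have hxx' : x * (starRingEnd ℂ) x = (q:ℂ) := by rw [mul_comm]; exact hxx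
      simp only [map_mul, map_neg, Complex.conj_ofReal, Complex.conj_conj]
      push_cast
      linear_combination (-(s:ℂ)) * hxx + (-(s:ℂ) + (s:ℂ)^2 * (br:ℂ)) * hxx' 
    rw [hexp] at h0
    exact_mod_cast h0
  have hqle : q ≤ 0 := by
    set s := 1/(br+1) with hs'
    have hs : 0 < s := by positivity
    have h2 : s * (br+1) = 1 := by rw [hs']; field_simp
    have h3 : s * br = 1 - s := by linear_combination h2
    have h1 := key s
    have e : -2*s*q + s^2*q*br = q*(-s - s^2) := by linear_combination (q*s)*h3
    rw [e] at h1
    nlinarith [mul_pos hs hs]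
  have : q = 0 := le_antisymm hqle (Complex.normSq_nonneg x)
  exact Complex.normSq_eq_zero.mp this

lemma B_null' (hK : IsPosKernel K) {u : (Fin d → ℤ) →₀ F} (h : B K u u = 0)
    (v : (Fin d → ℤ) →₀ F) : B K v u = 0 := by
  rw [B_conj hK, B_null hK h v, map_zero]

variable (K)

/-- Null space of the form `B`. -/
def Nsub : Submodule ℂ ((Fin d → ℤ) →₀ F) where
  carrier := {v | ∀ u, B K u v = 0}
  add_mem' := fun {a b} ha hb u => by rw [B_add_right, ha u, hb u, add_zero]
  zero_mem' := fun u => B_zero_right K u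
  smul_mem' := fun c a ha u => by rw [B_smul_right, ha u, mul_zero]

/-- The pre-Hilbert quotient space. -/
def Qt (_hK : IsPosKernel K) : Type u := ((Fin d → ℤ) →₀ F) ⧸ Nsub K

variable {K} (hK : IsPosKernel K)

noncomputable instance : AddCommGroup (Qt K hK) := inferInstanceAs (AddCommGroup (_ ⧸ Nsub K))
noncomputable instance : Module ℂ (Qt K hK) := inferInstanceAs (Module ℂ (_ ⧸ Nsub K))

/-- Class map into the quotient. -/
noncomputable def mkQ (u : (Fin d → ℤ) →₀ F) : Qt K hK := Submodule.Quotient.mk u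

lemma mkQ_surjective : Function.Surjective (mkQ hK) := Submodule.Quotient.mk_surjective _

lemma mkQ_add (u v : (Fin d → ℤ) →₀ F) : mkQ hK (u + v) = mkQ hK u + mkQ hK v := rfl
lemma mkQ_smul (c : ℂ) (u : (Fin d → ℤ) →₀ F) : mkQ hK (c • u) = c • mkQ hK u := rfl

lemma mkQ_eq_zero {u : (Fin d → ℤ) →₀ F} (h : u ∈ Nsub K) : mkQ hK u = 0 :=
  (Submodule.Quotient.mk_eq_zero _).mpr h

/-- Inner-product-space core structure on the quotient. -/
noncomputable def coreQt : InnerProductSpace.Core ℂ (Qt K hK) where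
  inner x y := Quotient.liftOn₂' x y (fun u v => B K v u) (by
    intro a₁ a₂ b₁ b₂ h1 h2
    have h1' : a₁ - b₁ ∈ Nsub K := (Submodule.quotientRel_def _).mp h1
    have h2' : a₂ - b₂ ∈ Nsub K := (Submodule.quotientRel_def _).mp h2
    have e1 : B K a₂ (a₁ - b₁) = 0 := h1' a₂
    have e2 : B K (a₂ - b₂) b₁ = 0 := by
      rw [B_conj hK b₁ (a₂ - b₂), h2' b₁, map_zero]
    rw [B_sub_right] at e1
    rw [B_sub_left] at e2
    linear_combination e1 + e2)
  conj_inner_symm := by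
    rintro ⟨u⟩ ⟨v⟩
    exact (B_conj hK u v).symm
  re_inner_nonneg := by
    rintro ⟨u⟩
    exact B_self_re_nonneg hK u
  add_left := by
    rintro ⟨u⟩ ⟨v⟩ ⟨w⟩
    exact B_add_right K w u v
  smul_left := by
    rintro ⟨u⟩ ⟨v⟩ r
    exact B_smul_right K r v u
  definite := by
    rintro ⟨u⟩ h
    exact mkQ_eq_zero hK fun w => B_null' hK h w

noncomputable instance : NormedAddCommGroup (Qt K hK) :=
  @InnerProductSpace.Core.toNormedAddCommGroup ℂ (Qt K hK) _ _ _ (coreQt hK)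

noncomputable instance : InnerProductSpace ℂ (Qt K hK) :=
  InnerProductSpace.ofCore (coreQt hK).toCore

lemma inner_mkQ (u v : (Fin d → ℤ) →₀ F) :
    (inner ℂ (mkQ hK u) (mkQ hK v) : ℂ) = B K v u := rfl

variable (K) in
/-- Coefficient evaluation on the free space. -/
noncomputable def rhoV (n : Fin d → ℤ) : ((Fin d → ℤ) →₀ F) →ₗ[ℂ] F :=
  Finsupp.lsum ℂ fun m => (K n m).toLinearMap

lemma rhoV_apply (n : Fin d → ℤ) (u : (Fin d → ℤ) →₀ F) :
    rhoV K n u = u.sum fun m um => K n m um := Finsupp.lsum_apply ℂ _ u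

lemma rhoV_single (n m : Fin d → ℤ) (f : F) :
    rhoV K n (Finsupp.single m f) = K n m f := Finsupp.lsum_single ℂ _ m f

lemma B_single_left (n : Fin d → ℤ) (f : F) (u : (Fin d → ℤ) →₀ F) :
    B K (Finsupp.single n f) u = (inner ℂ (rhoV K n u) f : ℂ) := by
  unfold B
  rw [Finsupp.sum_single_index (by simp), rhoV_apply]
  simp only [Finsupp.sum]
  rw [sum_inner]

lemma inner_mkQ_single (u : (Fin d → ℤ) →₀ F) (n : Fin d → ℤ) (f : F) :
    (inner ℂ (mkQ hK u) (mkQ hK (Finsupp.single n f)) : ℂ) = (inner ℂ (rhoV K n u) f : ℂ) := by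
  rw [inner_mkQ, B_single_left]

lemma norm_mkQ_single_le (n : Fin d → ℤ) (f : F) :
    ‖mkQ hK (Finsupp.single n f)‖ ≤ Real.sqrt ‖K n n‖ * ‖f‖ := by
  have h1 : (‖mkQ hK (Finsupp.single n f)‖ : ℝ) ^ 2
      = RCLike.re (inner ℂ (mkQ hK (Finsupp.single n f)) (mkQ hK (Finsupp.single n f)) : ℂ) :=
    (inner_self_eq_norm_sq _).symm
  rw [inner_mkQ_single hK _ n f, rhoV_single] at h1
  have h2 : RCLike.re (inner ℂ (K n n f) f : ℂ) ≤ ‖K n n‖ * ‖f‖ ^ 2 := by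
    calc RCLike.re (inner ℂ (K n n f) f : ℂ) ≤ ‖(inner ℂ (K n n f) f : ℂ)‖ :=
          RCLike.re_le_norm _
      _ ≤ ‖K n n f‖ * ‖f‖ := norm_inner_le_norm _ _
      _ ≤ (‖K n n‖ * ‖f‖) * ‖f‖ := by
          gcongr
          exact (K n n).le_opNorm f
      _ = ‖K n n‖ * ‖f‖ ^ 2 := by ring
  have h3 : ‖mkQ hK (Finsupp.single n f)‖ ^ 2 ≤ (Real.sqrt ‖K n n‖ * ‖f‖) ^ 2 := by
    rw [mul_pow, Real.sq_sqrt (norm_nonneg _)]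
    rw [h1]; exact h2
  have h4 : (0:ℝ) ≤ Real.sqrt ‖K n n‖ * ‖f‖ := by positivity
  nlinarith [norm_nonneg (mkQ hK (Finsupp.single n f))]

lemma norm_rhoV_le (n : Fin d → ℤ) (u : (Fin d → ℤ) →₀ F) :
    ‖rhoV K n u‖ ≤ Real.sqrt ‖K n n‖ * ‖mkQ hK u‖ := by
  set f := rhoV K n u with hf
  have h1 : (‖f‖ : ℝ) ^ 2 = RCLike.re (inner ℂ (mkQ hK u) (mkQ hK (Finsupp.single n f)) : ℂ) := by
    rw [inner_mkQ_single hK u n f, ← hf, ← inner_self_eq_norm_sq (𝕜 := ℂ)]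
  have h2 : RCLike.re (inner ℂ (mkQ hK u) (mkQ hK (Finsupp.single n f)) : ℂ)
      ≤ ‖mkQ hK u‖ * (Real.sqrt ‖K n n‖ * ‖f‖) := by
    calc RCLike.re (inner ℂ (mkQ hK u) (mkQ hK (Finsupp.single n f)) : ℂ)
        ≤ ‖(inner ℂ (mkQ hK u) (mkQ hK (Finsupp.single n f)) : ℂ)‖ := RCLike.re_le_norm _
      _ ≤ ‖mkQ hK u‖ * ‖mkQ hK (Finsupp.single n f)‖ := norm_inner_le_norm _ _
      _ ≤ ‖mkQ hK u‖ * (Real.sqrt ‖K n n‖ * ‖f‖) := by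
          gcongr
          exact norm_mkQ_single_le hK n f
  rcases eq_or_ne ‖f‖ 0 with h | h
  · rw [h]; positivity
  · have hpos : 0 < ‖f‖ := lt_of_le_of_ne (norm_nonneg f) (Ne.symm h)
    have : ‖f‖ * ‖f‖ ≤ (Real.sqrt ‖K n n‖ * ‖mkQ hK u‖) * ‖f‖ := by nlinarith
    exact le_of_mul_le_mul_right this hpos

/-- Coefficient evaluation on the quotient. -/
noncomputable def rhoQ (n : Fin d → ℤ) : Qt K hK →ₗ[ℂ] F :=
  Submodule.liftQ (Nsub K) (rhoV K n) (by
    intro u hu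
    have h0 : (inner ℂ (rhoV K n u) (rhoV K n u) : ℂ) = 0 := by
      rw [← B_single_left n (rhoV K n u) u]
      exact hu (Finsupp.single n (rhoV K n u))
    simpa using (inner_self_eq_zero (𝕜 := ℂ)).mp h0)

lemma rhoQ_mkQ (n : Fin d → ℤ) (u : (Fin d → ℤ) →₀ F) :
    rhoQ hK n (mkQ hK u) = rhoV K n u := rfl

/-- Coefficient evaluation as continuous linear map on the quotient. -/
noncomputable def rhoQc (n : Fin d → ℤ) : Qt K hK →L[ℂ] F :=
  LinearMap.mkContinuous (rhoQ hK n) (Real.sqrt ‖K n n‖) (by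
    intro x
    obtain ⟨u, rfl⟩ := mkQ_surjective hK x
    exact norm_rhoV_le hK n u)

variable [CompleteSpace F]

/-- Coefficient evaluation on the completion. -/
noncomputable def rho (n : Fin d → ℤ) : UniformSpace.Completion (Qt K hK) →L[ℂ] F :=
  (rhoQc hK n).extend (UniformSpace.Completion.toComplL)

lemma rho_coe (n : Fin d → ℤ) (x : Qt K hK) :
    rho hK n (x : UniformSpace.Completion (Qt K hK)) = rhoQc hK n x := by
  have h := ContinuousLinearMap.extend_eq (rhoQc hK n) (e := UniformSpace.Completion.toComplL)
    UniformSpace.Completion.denseRange_coe (UniformSpace.Completion.isUniformInducing_coe _) x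
  simpa [rho, UniformSpace.Completion.coe_toComplL] using h

lemma inner_rho (y : UniformSpace.Completion (Qt K hK)) (m : Fin d → ℤ) (f : F) :
    (inner ℂ y ((mkQ hK (Finsupp.single m f) : Qt K hK) : UniformSpace.Completion (Qt K hK)) : ℂ)
      = (inner ℂ (rho hK m y) f : ℂ) := by
  refine UniformSpace.Completion.induction_on y ?_ ?_
  · exact isClosed_eq (Continuous.inner continuous_id continuous_const)
      (Continuous.inner (rho hK m).continuous continuous_const)
  · intro x
    rw [UniformSpace.Completion.inner_coe, rho_coe]
    obtain ⟨u, rfl⟩ := mkQ_surjective hK x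
    exact inner_mkQ_single hK u m f

lemma adjoint_rho (m : Fin d → ℤ) (f : F) :
    ContinuousLinearMap.adjoint (rho hK m) f
      = ((mkQ hK (Finsupp.single m f) : Qt K hK) : UniformSpace.Completion (Qt K hK)) := by
  refine ext_inner_left ℂ fun y => ?_
  rw [adjoint_inner_right, inner_rho]

lemma rho_adjoint (n m : Fin d → ℤ) :
    rho hK n ∘L ContinuousLinearMap.adjoint (rho hK m) = K n m := by
  ext f
  rw [ContinuousLinearMap.comp_apply, adjoint_rho, rho_coe]
  exact rhoV_single n m f

lemma rho_separating (g : UniformSpace.Completion (Qt K hK))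
    (h : ∀ n, rho hK n g = 0) : g = 0 := by
  have key : ∀ y : UniformSpace.Completion (Qt K hK), (inner ℂ g y : ℂ) = 0 := by
    intro y
    refine UniformSpace.Completion.induction_on y
      (isClosed_eq (Continuous.inner continuous_const continuous_id) continuous_const) ?_
    intro x
    obtain ⟨u, rfl⟩ := mkQ_surjective hK x
    have hrep : (mkQ hK u : UniformSpace.Completion (Qt K hK))
        = ∑ m ∈ u.support,
            ((mkQ hK (Finsupp.single m (u m)) : Qt K hK) : UniformSpace.Completion (Qt K hK)) := by
      have h1 : u = ∑ m ∈ u.support, Finsupp.single m (u m) := by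
        conv_lhs => rw [← Finsupp.sum_single u]
        rfl
      have h2 : mkQ hK u = ∑ m ∈ u.support, mkQ hK (Finsupp.single m (u m)) := by
        conv_lhs => rw [h1]
        exact map_sum ((Nsub K).mkQ) _ _
      rw [h2]
      exact map_sum (UniformSpace.Completion.toComplL (𝕜 := ℂ) (E := Qt K hK)) _ _
    rw [hrep, inner_sum]
    refine Finset.sum_eq_zero fun m _ => ?_
    rw [inner_rho, h m, inner_zero_left]
  exact inner_self_eq_zero (𝕜 := ℂ).mp (key g)

section Universal

variable {G : Type*} [NormedAddCommGroup G] [InnerProductSpace ℂ G] [CompleteSpace G]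
variable (ρ : (Fin d → ℤ) → G →L[ℂ] F)

/-- The comparison map from the free space. -/
noncomputable def Lmap : ((Fin d → ℤ) →₀ F) →ₗ[ℂ] G :=
  Finsupp.lsum ℂ fun m => (ContinuousLinearMap.adjoint (ρ m)).toLinearMap

lemma Lmap_single (m : Fin d → ℤ) (f : F) :
    Lmap ρ (Finsupp.single m f) = ContinuousLinearMap.adjoint (ρ m) f :=
  Finsupp.lsum_single ℂ _ m f

variable {ρ}

lemma inner_Lmap (hadj : ∀ n m, ρ n ∘L ContinuousLinearMap.adjoint (ρ m) = K n m)
    (u v : (Fin d → ℤ) →₀ F) :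
    (inner ℂ (Lmap ρ u) (Lmap ρ v) : ℂ) = B K v u := by
  rw [Lmap, Finsupp.lsum_apply, Finsupp.lsum_apply]
  unfold B
  simp only [Finsupp.sum]
  rw [sum_inner, Finset.sum_comm]
  refine Finset.sum_congr rfl fun n _ => ?_
  rw [inner_sum]
  refine Finset.sum_congr rfl fun m _ => ?_
  simp only [ContinuousLinearMap.coe_coe]
  rw [adjoint_inner_right]
  have h : ρ m (ContinuousLinearMap.adjoint (ρ n) (u n)) = K m n (u n) := by
    rw [← ContinuousLinearMap.comp_apply, hadj]
  rw [h]

/-- The comparison map on the quotient. -/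
noncomputable def LmapQ (hadj : ∀ n m, ρ n ∘L ContinuousLinearMap.adjoint (ρ m) = K n m) : Qt K hK →ₗ[ℂ] G :=
  Submodule.liftQ (Nsub K) (Lmap ρ) (by
    intro u hu
    have h0 : (inner ℂ (Lmap ρ u) (Lmap ρ u) : ℂ) = 0 := by
      rw [inner_Lmap hadj u u]
      exact hu u
    simpa using (inner_self_eq_zero (𝕜 := ℂ)).mp h0)

lemma LmapQ_mkQ (hadj : ∀ n m, ρ n ∘L ContinuousLinearMap.adjoint (ρ m) = K n m) (u : (Fin d → ℤ) →₀ F) : LmapQ hK hadj (mkQ hK u) = Lmap ρ u := rfl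

lemma norm_LmapQ (hadj : ∀ n m, ρ n ∘L ContinuousLinearMap.adjoint (ρ m) = K n m) (x : Qt K hK) : ‖LmapQ hK hadj x‖ = ‖x‖ := by
  obtain ⟨u, rfl⟩ := mkQ_surjective hK x
  have h1 : ‖LmapQ hK hadj (mkQ hK u)‖ ^ 2 = ‖mkQ hK u‖ ^ 2 := by
    rw [← inner_self_eq_norm_sq (𝕜 := ℂ), ← inner_self_eq_norm_sq (𝕜 := ℂ)]
    rw [LmapQ_mkQ, inner_Lmap hadj u u, inner_mkQ]
  have h2 := congrArg Real.sqrt h1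
  rwa [Real.sqrt_sq (norm_nonneg _), Real.sqrt_sq (norm_nonneg _)] at h2

/-- The comparison map as a linear isometry on the quotient. -/
noncomputable def LisoQ (hadj : ∀ n m, ρ n ∘L ContinuousLinearMap.adjoint (ρ m) = K n m) : Qt K hK →ₗᵢ[ℂ] G := ⟨LmapQ hK hadj, norm_LmapQ hK hadj⟩

/-- The comparison map on the completion. -/
noncomputable def Wc (hadj : ∀ n m, ρ n ∘L ContinuousLinearMap.adjoint (ρ m) = K n m) : UniformSpace.Completion (Qt K hK) →L[ℂ] G :=
  (LisoQ hK hadj).toContinuousLinearMap.extend (UniformSpace.Completion.toComplL)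

lemma Wc_coe (hadj : ∀ n m, ρ n ∘L ContinuousLinearMap.adjoint (ρ m) = K n m) (x : Qt K hK) :
    Wc hK hadj (x : UniformSpace.Completion (Qt K hK)) = LmapQ hK hadj x := by
  have h := ContinuousLinearMap.extend_eq (LisoQ hK hadj).toContinuousLinearMap
    (e := UniformSpace.Completion.toComplL) UniformSpace.Completion.denseRange_coe
    (UniformSpace.Completion.isUniformInducing_coe _) x
  exact (by simpa [Wc, UniformSpace.Completion.coe_toComplL] using h :
    Wc hK hadj (x : UniformSpace.Completion (Qt K hK)) = LisoQ hK hadj x)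

lemma norm_Wc (hadj : ∀ n m, ρ n ∘L ContinuousLinearMap.adjoint (ρ m) = K n m) (y : UniformSpace.Completion (Qt K hK)) : ‖Wc hK hadj y‖ = ‖y‖ := by
  refine UniformSpace.Completion.induction_on y
    (isClosed_eq (continuous_norm.comp (Wc hK hadj).continuous) continuous_norm) ?_
  intro x
  rw [Wc_coe, UniformSpace.Completion.norm_coe]
  exact norm_LmapQ hK hadj x

/-- The comparison linear isometry on the completion. -/
noncomputable def Wli (hadj : ∀ n m, ρ n ∘L ContinuousLinearMap.adjoint (ρ m) = K n m) : UniformSpace.Completion (Qt K hK) →ₗᵢ[ℂ] G :=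
  ⟨(Wc hK hadj).toLinearMap, norm_Wc hK hadj⟩

lemma Wli_surjective (hadj : ∀ n m, ρ n ∘L ContinuousLinearMap.adjoint (ρ m) = K n m)
    (hsep : ∀ g : G, (∀ n, ρ n g = 0) → g = 0) : Function.Surjective (Wli hK hadj) := by
  have hrange_closed : IsClosed (Set.range (Wli hK hadj)) :=
    ((Wli hK hadj).isometry.isClosedEmbedding).isClosed_range
  set R := LinearMap.range (Wli hK hadj).toLinearMap with hR
  have hRcoe : (R : Set G) = Set.range (Wli hK hadj) := by
    ext g; simp [hR, LinearMap.mem_range]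
  have horth : Rᗮ = ⊥ := by
    rw [Submodule.eq_bot_iff]
    intro g hg
    refine hsep g fun m => ?_
    refine ext_inner_left ℂ fun f => ?_
    have hmem : ContinuousLinearMap.adjoint (ρ m) f ∈ R := by
      refine ⟨((mkQ hK (Finsupp.single m f) : Qt K hK) : UniformSpace.Completion (Qt K hK)), ?_⟩
      show Wc hK hadj _ = _
      rw [Wc_coe, LmapQ_mkQ, Lmap_single]
    have := hg _ hmem
    rw [adjoint_inner_left] at this
    rw [this, inner_zero_right]
  have htop : R.topologicalClosure = ⊤ := Submodule.topologicalClosure_eq_top_iff.mpr horth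
  have hclosed : R.topologicalClosure = R :=
    IsClosed.submodule_topologicalClosure_eq (by rw [hRcoe]; exact hrange_closed)
  have : R = ⊤ := by rw [← hclosed, htop]
  intro g
  have : g ∈ R := this ▸ Submodule.mem_top
  obtain ⟨y, hy⟩ := this
  exact ⟨y, hy⟩

/-- The comparison unitary. -/
noncomputable def Wequiv (hadj : ∀ n m, ρ n ∘L ContinuousLinearMap.adjoint (ρ m) = K n m)
    (hsep : ∀ g : G, (∀ n, ρ n g = 0) → g = 0) : UniformSpace.Completion (Qt K hK) ≃ₗᵢ[ℂ] G :=
  LinearIsometryEquiv.ofSurjective (Wli hK hadj) (Wli_surjective hK hadj hsep)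

lemma Wequiv_intertwine (hadj : ∀ n m, ρ n ∘L ContinuousLinearMap.adjoint (ρ m) = K n m)
    (hsep : ∀ g : G, (∀ n, ρ n g = 0) → g = 0) (n : Fin d → ℤ) (y : UniformSpace.Completion (Qt K hK)) :
    ρ n (Wequiv hK hadj hsep y) = rho hK n y := by
  refine UniformSpace.Completion.induction_on y
    (isClosed_eq ((ρ n).continuous.comp (Wequiv hK hadj hsep).continuous)
      (rho hK n).continuous) ?_
  intro x
  have h1 : Wequiv hK hadj hsep (x : UniformSpace.Completion (Qt K hK)) = LmapQ hK hadj x := by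
    rw [show (Wequiv hK hadj hsep : UniformSpace.Completion (Qt K hK) → G)
      = Wli hK hadj from LinearIsometryEquiv.coe_ofSurjective _ _]
    exact Wc_coe hK hadj x
  rw [h1, rho_coe]
  obtain ⟨u, rfl⟩ := mkQ_surjective hK x
  rw [LmapQ_mkQ]
  show ρ n (Lmap ρ u) = rhoV K n u
  rw [Lmap, Finsupp.lsum_apply, rhoV_apply, map_finsuppSum]
  refine Finsupp.sum_congr fun m _ => ?_
  show ρ n (ContinuousLinearMap.adjoint (ρ m) (u m)) = K n m (u m)
  rw [← ContinuousLinearMap.comp_apply, hadj]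

end Universal

end FRKHS

/-- **Existence and uniqueness of the formal reproducing kernel Hilbert space of a
positive kernel.**  For a positive kernel `K` there exist a Hilbert space `G` and a
separating family of bounded coefficient-evaluation operators `ρ_n : G → F` with
`ρ_n ρ_m* = K(n,m)`; moreover such data are unique up to a unitary `V : G ≃ G'`
intertwining the coefficient evaluations. -/
theorem frkhs_existence_and_uniqueness {d : ℕ} {F : Type u} [NormedAddCommGroup F]
    [InnerProductSpace ℂ F] [CompleteSpace F]
    (K : (Fin d → ℤ) → (Fin d → ℤ) → F →L[ℂ] F) (hK : IsPosKernel K) :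
    (∃ (G : Type u) (_ : NormedAddCommGroup G) (_ : InnerProductSpace ℂ G)
        (_ : CompleteSpace G) (ρ : (Fin d → ℤ) → G →L[ℂ] F),
        (∀ g : G, (∀ n, ρ n g = 0) → g = 0) ∧
        ∀ n m, ρ n ∘L adjoint (ρ m) = K n m) ∧
    (∀ (G G' : Type u) (_ : NormedAddCommGroup G) (_ : InnerProductSpace ℂ G)
        (_ : CompleteSpace G) (_ : NormedAddCommGroup G') (_ : InnerProductSpace ℂ G')
        (_ : CompleteSpace G') (ρ : (Fin d → ℤ) → G →L[ℂ] F)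
        (ρ' : (Fin d → ℤ) → G' →L[ℂ] F),
        (∀ g : G, (∀ n, ρ n g = 0) → g = 0) →
        (∀ g : G', (∀ n, ρ' n g = 0) → g = 0) →
        (∀ n m, ρ n ∘L adjoint (ρ m) = K n m) →
        (∀ n m, ρ' n ∘L adjoint (ρ' m) = K n m) →
        ∃ V : G ≃ₗᵢ[ℂ] G', ∀ n g, ρ' n (V g) = ρ n g) := by
  constructor
  · exact ⟨UniformSpace.Completion (FRKHS.Qt K hK), inferInstance, inferInstance, inferInstance,
      FRKHS.rho hK, FRKHS.rho_separating hK, FRKHS.rho_adjoint hK⟩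
  · intro G G' i1 i2 i3 i4 i5 i6 ρ ρ' hsep hsep' hadj hadj'
    letI := i1; letI := i2; letI := i3; letI := i4; letI := i5; letI := i6
    refine ⟨(FRKHS.Wequiv hK hadj hsep).symm.trans (FRKHS.Wequiv hK hadj' hsep'), ?_⟩
    intro n g
    rw [LinearIsometryEquiv.trans_apply, FRKHS.Wequiv_intertwine hK hadj' hsep',
      ← FRKHS.Wequiv_intertwine hK hadj hsep, LinearIsometryEquiv.apply_symm_apply]
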